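/- Let τ₀ ≥ 1 and C ≥ 0, and let a : [τ₀, ∞) → ℝ be a differentiable, bounded function such that |a'(τ) − a(τ)| ≤ C/τ² for all τ ≥ τ₀. Then |a(τ)| ≤ C/τ² for all τ ≥ τ₀. -/

import Mathlib

/-- If `a` is differentiable and bounded on `[τ₀, ∞)` with `|a' - a| ≤ C/τ²` there
(`τ₀ ≥ 1`, `C ≥ 0`), then `|a(τ)| ≤ C/τ²` for all `τ ≥ τ₀`. -/
theorem bounded_forced_growth_decay (τ₀ C : ℝ) (hτ₀ : 1 ≤ τ₀) (hC : 0 ≤ C)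
    (a : ℝ → ℝ)
    (hdiff : ∀ τ, τ₀ ≤ τ → DifferentiableAt ℝ a τ)
    (hbdd : ∃ M : ℝ, ∀ τ, τ₀ ≤ τ → |a τ| ≤ M)
    (hineq : ∀ τ, τ₀ ≤ τ → |deriv a τ - a τ| ≤ C / τ ^ 2) :
    ∀ τ, τ₀ ≤ τ → |a τ| ≤ C / τ ^ 2 := by
  obtain ⟨M, hM⟩ := hbdd
  intro τ hτ
  have hτpos : 0 < τ := lt_of_lt_of_le one_pos (hτ₀.trans hτ)
  set K := C / τ ^ 2 with hK
  have hKnn : 0 ≤ K := div_nonneg hC (by positivity)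
  -- derivative of exp(-t) * a t
  have hder : ∀ s, τ₀ ≤ s → HasDerivAt (fun t => Real.exp (-t) * a t)
      (Real.exp (-s) * (deriv a s - a s)) s := by
    intro s hs
    have h1 : HasDerivAt (fun t : ℝ => Real.exp (-t)) (-Real.exp (-s)) s := by
      simpa [Function.comp_def] using (Real.hasDerivAt_exp (-s)).comp s (hasDerivAt_neg' s)
    have h2 := (hdiff s hs).hasDerivAt
    have := h1.mul h2
    exact this.congr_deriv (by ring)
  have hexpder : ∀ s : ℝ, HasDerivAt (fun t : ℝ => K * Real.exp (-t))
      (-(K * Real.exp (-s))) s := by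
    intro s
    have h1 : HasDerivAt (fun t : ℝ => Real.exp (-t)) (-Real.exp (-s)) s := by
      simpa [Function.comp_def] using (Real.hasDerivAt_exp (-s)).comp s (hasDerivAt_neg' s)
    exact (h1.const_mul K).congr_deriv (by ring)
  -- forcing bound on Ioi τ
  have hforce : ∀ s, τ ≤ s → |deriv a s - a s| ≤ K := by
    intro s hs
    refine (hineq s ((hτ).trans hs)).trans ?_
    exact div_le_div_of_nonneg_left hC (by positivity)
      (pow_le_pow_left₀ hτpos.le hs 2)
  -- u is antitone on Ici τ
  have hu : AntitoneOn (fun t => Real.exp (-t) * a t + K * Real.exp (-t)) (Set.Ici τ) := by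
    apply antitoneOn_of_deriv_nonpos (convex_Ici τ)
    · intro s hs
      exact (((hder s ((hτ).trans hs)).add (hexpder s)).continuousAt).continuousWithinAt
    · intro s hs
      rw [interior_Ici] at hs
      exact (((hder s ((hτ).trans hs.le)).add (hexpder s))).differentiableAt.differentiableWithinAt
    · intro s hs
      rw [interior_Ici] at hs
      rw [HasDerivAt.deriv (f := fun t => Real.exp (-t) * a t + K * Real.exp (-t)) ((hder s ((hτ).trans hs.le)).add (hexpder s))]
      have h1 : deriv a s - a s ≤ K := (abs_le.mp (hforce s hs.le)).2
      have h2 : Real.exp (-s) * (deriv a s - a s) ≤ Real.exp (-s) * K :=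
        mul_le_mul_of_nonneg_left h1 (Real.exp_pos _).le
      nlinarith [Real.exp_pos (-s)]
  -- v is monotone on Ici τ
  have hv : MonotoneOn (fun t => Real.exp (-t) * a t - K * Real.exp (-t)) (Set.Ici τ) := by
    apply monotoneOn_of_deriv_nonneg (convex_Ici τ)
    · intro s hs
      exact (((hder s ((hτ).trans hs)).sub (hexpder s)).continuousAt).continuousWithinAt
    · intro s hs
      rw [interior_Ici] at hs
      exact (((hder s ((hτ).trans hs.le)).sub (hexpder s))).differentiableAt.differentiableWithinAt
    · intro s hs
      rw [interior_Ici] at hs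
      rw [HasDerivAt.deriv (f := fun t => Real.exp (-t) * a t - K * Real.exp (-t)) ((hder s ((hτ).trans hs.le)).sub (hexpder s))]
      have h1 : -K ≤ deriv a s - a s := (abs_le.mp (hforce s hs.le)).1
      nlinarith [Real.exp_pos (-s), mul_le_mul_of_nonneg_left h1 (Real.exp_pos (-s)).le]
  -- limits
  have htend : Filter.Tendsto (fun T : ℝ => M * Real.exp (-T)) Filter.atTop (nhds 0) := by
    have := Real.tendsto_exp_neg_atTop_nhds_zero
    simpa using this.const_mul M
  -- lower bound
  have hlow : 0 ≤ Real.exp (-τ) * a τ + K * Real.exp (-τ) := by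
    have htend' : Filter.Tendsto (fun T : ℝ => -(M * Real.exp (-T))) Filter.atTop (nhds 0) := by
      simpa using htend.neg
    refine le_of_tendsto htend' ?_
    filter_upwards [Filter.eventually_ge_atTop τ] with T hT
    have h1 := hu (Set.self_mem_Ici) hT hT
    have h2 : -M ≤ a T := (abs_le.mp (hM T ((hτ).trans hT))).1
    have h3 : Real.exp (-T) * (-M) ≤ Real.exp (-T) * a T :=
      mul_le_mul_of_nonneg_left h2 (Real.exp_pos _).le
    have h4 : 0 ≤ K * Real.exp (-T) := mul_nonneg hKnn (Real.exp_pos _).le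
    simp only at h1
    nlinarith
  -- upper bound
  have hhigh : Real.exp (-τ) * a τ - K * Real.exp (-τ) ≤ 0 := by
    refine ge_of_tendsto htend ?_
    filter_upwards [Filter.eventually_ge_atTop τ] with T hT
    have h1 := hv (Set.self_mem_Ici) hT hT
    have h2 : a T ≤ M := (abs_le.mp (hM T ((hτ).trans hT))).2
    have h3 : Real.exp (-T) * a T ≤ Real.exp (-T) * M :=
      mul_le_mul_of_nonneg_left h2 (Real.exp_pos _).le
    have h4 : 0 ≤ K * Real.exp (-T) := mul_nonneg hKnn (Real.exp_pos _).le
    simp only at h1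
    nlinarith
  have he : 0 < Real.exp (-τ) := Real.exp_pos _
  rw [abs_le]
  constructor
  · nlinarith
  · nlinarith
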